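/- Let τ > 0, C₅ > 0, β > 0, E > 0 with 2κ₂ > Eβ, ξ > 1, a₁, a₂ ∈ ℝ, κ₁ ≥ 0, and M as above. Define φ₅(x,y) = C₅(E|x|^β − y²|x|^{β+1}) on X₅ = {(x,y) : x ≤ −1, |y| ≤ ξ^{-1}√(E/|x|)}. Then φ₅ ≥ 0 on X₅ (indeed E|x|^β − y²|x|^{β+1} ≥ E(1 − ξ^{-2})|x|^β > 0 there), φ₅ → ∞ as |x| → ∞ in X₅, and there exist R > 0 and c > 0 such that for (x,y) ∈ X₅ with x²+y² ≥ R², τ(Mφ₅)(x,y) ≤ −c|x|^{β+1}; in particular Mφ₅ → −∞ as x²+y² → ∞ in X₅. -/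

import Mathlib

/-- Partial derivative in `x` of a function of two real variables. -/
noncomputable def pdx (f : ℝ → ℝ → ℝ) (x y : ℝ) : ℝ := deriv (fun x' => f x' y) x

/-- Partial derivative in `y` of a function of two real variables. -/
noncomputable def pdy (f : ℝ → ℝ → ℝ) (x y : ℝ) : ℝ := deriv (fun y' => f x y') y

/-- The generator `M` of the planar diffusion, in real coordinates. -/
noncomputable def Mop (τ a₁ a₂ κ₁ κ₂ : ℝ) (f : ℝ → ℝ → ℝ) (x y : ℝ) : ℝ :=
  -(1 / τ) * (x ^ 2 - y ^ 2 - a₁) * pdx f x y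
    - (1 / τ) * (2 * x * y - a₂) * pdy f x y
    + (κ₁ / τ) * pdx (fun x' y' => pdx f x' y') x y
    + (κ₂ / τ) * pdy (fun x' y' => pdy f x' y') x y

open Real Filter

private lemma hasDerivAt_neg_rpow (p x : ℝ) (hx : x < 0) :
    HasDerivAt (fun x' : ℝ => (-x') ^ p) (-(p * (-x) ^ (p - 1))) x := by
  have h1 : HasDerivAt (fun z : ℝ => z ^ p) (p * (-x) ^ (p - 1)) (-x) :=
    Real.hasDerivAt_rpow_const (Or.inl (by linarith))
  have h2 : HasDerivAt (fun x' : ℝ => -x') (-1) x := (hasDerivAt_neg x)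
  exact (by simpa using h1.comp x h2 : HasDerivAt ((fun z : ℝ => z ^ p) ∘ Neg.neg) _ x)

section
variable (C₅ β E : ℝ) (φ₅ : ℝ → ℝ → ℝ)
  (hφ : ∀ x y, φ₅ x y = C₅ * (E * |x| ^ (β : ℝ) - y ^ 2 * |x| ^ (β + 1 : ℝ)))

include hφ

private lemma pdx_eq (x y : ℝ) (hx : x < 0) :
    pdx φ₅ x y = C₅ * (-(E * β * (-x) ^ (β - 1)) + y ^ 2 * ((β + 1) * (-x) ^ β)) := by
  have hev : (fun x' => φ₅ x' y) =ᶠ[nhds x]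
      (fun x' => C₅ * (E * (-x') ^ (β : ℝ) - y ^ 2 * (-x') ^ (β + 1 : ℝ))) := by
    filter_upwards [Iio_mem_nhds hx] with z hz
    rw [hφ, abs_of_neg hz]
  have hd : HasDerivAt (fun x' => C₅ * (E * (-x') ^ (β : ℝ) - y ^ 2 * (-x') ^ (β + 1 : ℝ)))
      (C₅ * (E * (-(β * (-x) ^ (β - 1))) - y ^ 2 * (-((β + 1) * (-x) ^ (β + 1 - 1))))) x :=
    (((hasDerivAt_neg_rpow β x hx).const_mul E).sub
      ((hasDerivAt_neg_rpow (β + 1) x hx).const_mul (y ^ 2))).const_mul C₅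
  rw [show β + 1 - 1 = β from by ring] at hd
  rw [pdx, hev.deriv_eq, hd.deriv]; ring

private lemma pdxx_eq (x y : ℝ) (hx : x < 0) :
    pdx (fun x' y' => pdx φ₅ x' y') x y
      = C₅ * (E * β * (β - 1) * (-x) ^ (β - 2) - y ^ 2 * ((β + 1) * β * (-x) ^ (β - 1))) := by
  have hev : (fun x' => pdx φ₅ x' y) =ᶠ[nhds x]
      (fun x' => C₅ * (-(E * β * (-x') ^ (β - 1)) + y ^ 2 * ((β + 1) * (-x') ^ β))) := by
    filter_upwards [Iio_mem_nhds hx] with z hz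
    exact pdx_eq C₅ β E φ₅ hφ z y hz
  have hd : HasDerivAt
      (fun x' => C₅ * (-(E * β * (-x') ^ (β - 1)) + y ^ 2 * ((β + 1) * (-x') ^ β)))
      (C₅ * (-(E * β * (-((β - 1) * (-x) ^ (β - 1 - 1)))) +
        y ^ 2 * ((β + 1) * (-(β * (-x) ^ (β - 1)))))) x :=
    ((((hasDerivAt_neg_rpow (β - 1) x hx).const_mul (E * β)).neg).add
      (((hasDerivAt_neg_rpow β x hx).const_mul (β + 1)).const_mul (y ^ 2))).const_mul C₅
  rw [show β - 1 - 1 = β - 2 from by ring] at hd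
  show deriv (fun x' => pdx φ₅ x' y) x = _
  rw [hev.deriv_eq, hd.deriv]; ring

private lemma pdy_eq (x y : ℝ) :
    pdy φ₅ x y = -(2 * C₅ * y * |x| ^ (β + 1 : ℝ)) := by
  have hfun : (fun y' => φ₅ x y') =
      fun y' => C₅ * (E * |x| ^ (β : ℝ) - y' ^ 2 * |x| ^ (β + 1 : ℝ)) :=
    funext fun y' => hφ x y'
  have h2 : HasDerivAt (fun y' : ℝ => y' ^ 2) (2 * y) y := by
    simpa using hasDerivAt_pow 2 y
  have hd : HasDerivAt (fun y' => C₅ * (E * |x| ^ (β : ℝ) - y' ^ 2 * |x| ^ (β + 1 : ℝ)))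
      (C₅ * (0 - 2 * y * |x| ^ (β + 1 : ℝ))) y :=
    ((hasDerivAt_const y (E * |x| ^ (β : ℝ))).sub (h2.mul_const _)).const_mul C₅
  rw [pdy, hfun, hd.deriv]; ring

private lemma pdyy_eq (x y : ℝ) :
    pdy (fun x' y' => pdy φ₅ x' y') x y = -(2 * C₅ * |x| ^ (β + 1 : ℝ)) := by
  have hfun : (fun y' => pdy φ₅ x y') = fun y' => -(2 * C₅ * y' * |x| ^ (β + 1 : ℝ)) :=
    funext fun y' => pdy_eq C₅ β E φ₅ hφ x y'
  have hd : HasDerivAt (fun y' : ℝ => -(2 * C₅ * y' * |x| ^ (β + 1 : ℝ)))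
      (-(2 * C₅ * 1 * |x| ^ (β + 1 : ℝ))) y := by
    have h1 : HasDerivAt (fun y' : ℝ => 2 * C₅ * y') (2 * C₅) y := by
      simpa using (hasDerivAt_id y).const_mul (2 * C₅)
    simpa using ((h1.mul_const (|x| ^ (β + 1 : ℝ))).fun_neg)
  show deriv (fun y' => pdy φ₅ x y') y = _
  rw [hfun, hd.deriv]; ring

private lemma tauM_eq (τ a₁ a₂ κ₁ κ₂ : ℝ) (hτ : 0 < τ) (x y : ℝ) (hx : x < 0) :
    τ * Mop τ a₁ a₂ κ₁ κ₂ φ₅ x y =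
      C₅ * ((E * β - 2 * κ₂) * (-x) ^ (β + 1)
        - (β + 5) * y ^ 2 * (-x) ^ (β + 2)
        - (y ^ 2 + a₁) * (E * β * (-x) ^ (β - 1) - (β + 1) * y ^ 2 * (-x) ^ β)
        - 2 * a₂ * y * (-x) ^ (β + 1)
        + κ₁ * (E * β * (β - 1) * (-x) ^ (β - 2) - β * (β + 1) * y ^ 2 * (-x) ^ (β - 1))) := by
  have h0 : (0 : ℝ) < -x := by linarith
  have key2 : ∀ p : ℝ, (-x) ^ p * (-x) = (-x) ^ (p + 1) := fun p =>
    (Real.rpow_add_one h0.ne' p).symm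
  have e1 : (-x) ^ (β - 1 : ℝ) = (-x) ^ (β - 2 : ℝ) * (-x) := by
    rw [key2]; congr 1; ring
  have e2 : (-x) ^ (β : ℝ) = (-x) ^ (β - 2 : ℝ) * (-x) * (-x) := by
    rw [key2, key2]; congr 1; ring
  have e3 : (-x) ^ (β + 1 : ℝ) = (-x) ^ (β - 2 : ℝ) * (-x) * (-x) * (-x) := by
    rw [key2, key2, key2]; congr 1; ring
  have e4 : (-x) ^ (β + 2 : ℝ) = (-x) ^ (β - 2 : ℝ) * (-x) * (-x) * (-x) * (-x) := by
    rw [key2, key2, key2, key2]; congr 1; ring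
  rw [Mop, pdx_eq C₅ β E φ₅ hφ x y hx, pdy_eq C₅ β E φ₅ hφ x y,
    pdxx_eq C₅ β E φ₅ hφ x y hx, pdyy_eq C₅ β E φ₅ hφ x y,
    abs_of_neg hx, e1, e2, e3, e4]
  field_simp
  ring

end

private lemma constraint_facts (E ξ x y : ℝ) (hE : 0 < E) (hξ : 1 < ξ)
    (hx : x ≤ -1) (hy : |y| ≤ ξ⁻¹ * Real.sqrt (E / |x|)) :
    1 ≤ -x ∧ |x| = -x ∧ y ^ 2 * (-x) ≤ ξ⁻¹ ^ 2 * E ∧ y ^ 2 * (-x) ≤ E ∧ y ^ 2 ≤ E := by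
  have hx1 : (1 : ℝ) ≤ -x := by linarith
  have hx0 : x < 0 := by linarith
  have habs : |x| = -x := abs_of_neg hx0
  have hso : (0:ℝ) < -x := by linarith
  have hxne : x ≠ 0 := ne_of_lt hx0
  have hξ0 : (0:ℝ) < ξ := by linarith
  have hEs : 0 ≤ E / (-x) := by positivity
  have hiξ : 0 < ξ⁻¹ := by positivity
  have hiξ1 : ξ⁻¹ ≤ 1 := by
    rw [inv_le_one_iff₀]; right; linarith
  have hsq : y ^ 2 ≤ ξ⁻¹ ^ 2 * (E / (-x)) := by
    have h1 : |y| ^ 2 ≤ (ξ⁻¹ * Real.sqrt (E / |x|)) ^ 2 :=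
      pow_le_pow_left₀ (abs_nonneg y) hy 2
    rw [sq_abs, habs, mul_pow, Real.sq_sqrt hEs] at h1
    exact h1
  have h2 : y ^ 2 * (-x) ≤ ξ⁻¹ ^ 2 * E := by
    have := mul_le_mul_of_nonneg_right hsq hso.le
    calc y ^ 2 * (-x) ≤ ξ⁻¹ ^ 2 * (E / (-x)) * (-x) := this
      _ = ξ⁻¹ ^ 2 * E := by field_simp
  have hξsq : ξ⁻¹ ^ 2 ≤ 1 := by nlinarith
  have h3 : y ^ 2 * (-x) ≤ E := by nlinarith
  refine ⟨hx1, habs, h2, h3, ?_⟩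
  nlinarith [mul_le_mul_of_nonneg_left hx1 (sq_nonneg y)]

private lemma rpow_shift (s p q : ℝ) (hs : 0 < s) (h : q = p + 1) : s ^ q = s ^ p * s := by
  subst h; exact Real.rpow_add_one hs.ne' p

set_option maxHeartbeats 1000000 in
theorem LF5 (τ C₅ β E ξ a₁ a₂ κ₁ κ₂ : ℝ) (hτ : 0 < τ)
    (hC : 0 < C₅) (hβ : 0 < β) (hE : 0 < E) (hκ₁ : 0 ≤ κ₁) (hκ₂ : 0 < κ₂)
    (hEβ : E * β < 2 * κ₂) (hξ : 1 < ξ)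
    (φ₅ : ℝ → ℝ → ℝ)
    (hφ : ∀ x y, φ₅ x y = C₅ * (E * |x| ^ (β : ℝ) - y ^ 2 * |x| ^ (β + 1 : ℝ))) :
    (∀ x y : ℝ, x ≤ -1 → |y| ≤ ξ⁻¹ * Real.sqrt (E / |x|) →
      E * (1 - ξ⁻¹ ^ 2) * |x| ^ (β : ℝ) ≤ E * |x| ^ (β : ℝ) - y ^ 2 * |x| ^ (β + 1 : ℝ) ∧
      0 < E * (1 - ξ⁻¹ ^ 2) * |x| ^ (β : ℝ) ∧ 0 ≤ φ₅ x y) ∧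
    (∀ K : ℝ, ∃ R : ℝ, ∀ x y : ℝ, x ≤ -1 → |y| ≤ ξ⁻¹ * Real.sqrt (E / |x|) →
      R ≤ |x| → K ≤ φ₅ x y) ∧
    (∃ R : ℝ, 0 < R ∧ ∃ c : ℝ, 0 < c ∧ ∀ x y : ℝ, x ≤ -1 →
      |y| ≤ ξ⁻¹ * Real.sqrt (E / |x|) → R ^ 2 ≤ x ^ 2 + y ^ 2 →
      τ * Mop τ a₁ a₂ κ₁ κ₂ φ₅ x y ≤ -c * |x| ^ (β + 1 : ℝ)) ∧
    (∀ K : ℝ, ∃ R : ℝ, ∀ x y : ℝ, x ≤ -1 → |y| ≤ ξ⁻¹ * Real.sqrt (E / |x|) →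
      R ≤ x ^ 2 + y ^ 2 → Mop τ a₁ a₂ κ₁ κ₂ φ₅ x y ≤ K) := by
  have hξsq : ξ⁻¹ ^ 2 < 1 := by
    have h0 : 0 < ξ⁻¹ := by positivity
    have h1 : ξ⁻¹ < 1 := by
      rw [inv_lt_one_iff₀]; right; exact hξ
    nlinarith
  -- Bullet 1
  have bullet1 : ∀ x y : ℝ, x ≤ -1 → |y| ≤ ξ⁻¹ * Real.sqrt (E / |x|) →
      E * (1 - ξ⁻¹ ^ 2) * |x| ^ (β : ℝ) ≤ E * |x| ^ (β : ℝ) - y ^ 2 * |x| ^ (β + 1 : ℝ) ∧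
      0 < E * (1 - ξ⁻¹ ^ 2) * |x| ^ (β : ℝ) ∧ 0 ≤ φ₅ x y := by
    intro x y hx hy
    obtain ⟨hs1, habs, hyx, -, -⟩ := constraint_facts E ξ x y hE hξ hx hy
    have hs0 : (0:ℝ) < -x := by linarith
    have hp3 : (0:ℝ) < (-x) ^ (β : ℝ) := Real.rpow_pos_of_pos hs0 _
    have hq4 : (-x) ^ (β + 1 : ℝ) = (-x) ^ (β : ℝ) * (-x) := rpow_shift _ _ _ hs0 rfl
    have key : E * (1 - ξ⁻¹ ^ 2) * (-x) ^ (β : ℝ)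
        ≤ E * (-x) ^ (β : ℝ) - y ^ 2 * (-x) ^ (β + 1 : ℝ) := by
      rw [hq4]
      have := mul_le_mul_of_nonneg_right hyx hp3.le
      linarith [this]
    rw [habs]
    refine ⟨key, mul_pos (mul_pos hE (by linarith)) hp3, ?_⟩
    rw [hφ, habs]
    have h0 : 0 ≤ E * (-x) ^ (β : ℝ) - y ^ 2 * (-x) ^ (β + 1 : ℝ) :=
      le_trans (mul_pos (mul_pos hE (by linarith : (0:ℝ) < 1 - ξ⁻¹ ^ 2)) hp3).le key
    exact mul_nonneg hC.le h0
  -- Bullet 3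
  have bullet3 : ∃ R : ℝ, 0 < R ∧ ∃ c : ℝ, 0 < c ∧ ∀ x y : ℝ, x ≤ -1 →
      |y| ≤ ξ⁻¹ * Real.sqrt (E / |x|) → R ^ 2 ≤ x ^ 2 + y ^ 2 →
      τ * Mop τ a₁ a₂ κ₁ κ₂ φ₅ x y ≤ -c * |x| ^ (β + 1 : ℝ) := by
    have hδ : (0:ℝ) < 2 * κ₂ - E * β := by linarith
    set A : ℝ := (E + |a₁|) * (E * β + (β + 1) * E)
        + 4 / (2 * κ₂ - E * β) * (a₂ ^ 2 * E) + κ₁ * (E * β * (β + 1)) with hAdef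
    have hA0 : 0 ≤ A := by positivity
    set s₀ : ℝ := 4 * A / (2 * κ₂ - E * β) + 1 with hs₀def
    have hs₀0 : 0 < s₀ := by positivity
    refine ⟨Real.sqrt (E + s₀ ^ 2), by positivity,
      C₅ * (2 * κ₂ - E * β) / 2, by positivity, ?_⟩
    intro x y hx hy hR
    obtain ⟨hs1, habs, -, hyxE, hyE⟩ := constraint_facts E ξ x y hE hξ hx hy
    have hx0 : x < 0 := by linarith
    have hs0 : (0:ℝ) < -x := by linarith
    -- s₀ ≤ -x
    have hRsq : Real.sqrt (E + s₀ ^ 2) ^ 2 = E + s₀ ^ 2 := Real.sq_sqrt (by positivity)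
    have hx2 : s₀ ^ 2 ≤ x ^ 2 := by linarith [hyE, hR, hRsq]
    have hss0 : s₀ ≤ -x := by
      calc s₀ = Real.sqrt (s₀ ^ 2) := (Real.sqrt_sq hs₀0.le).symm
        _ ≤ Real.sqrt (x ^ 2) := Real.sqrt_le_sqrt hx2
        _ = |x| := Real.sqrt_sq_eq_abs x
        _ = -x := habs
    -- rewrite the generator
    rw [tauM_eq C₅ β E φ₅ hφ τ a₁ a₂ κ₁ κ₂ hτ x y hx0, habs]
    -- powers
    set p1 : ℝ := (-x) ^ (β - 2 : ℝ) with hp1d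
    set p2 : ℝ := (-x) ^ (β - 1 : ℝ) with hp2d
    set p3 : ℝ := (-x) ^ (β : ℝ) with hp3d
    set p4 : ℝ := (-x) ^ (β + 1 : ℝ) with hp4d
    set p5 : ℝ := (-x) ^ (β + 2 : ℝ) with hp5d
    have hp1 : 0 < p1 := Real.rpow_pos_of_pos hs0 _
    have hp2 : 0 < p2 := Real.rpow_pos_of_pos hs0 _
    have hp3 : 0 < p3 := Real.rpow_pos_of_pos hs0 _
    have hp4 : 0 < p4 := Real.rpow_pos_of_pos hs0 _
    have hp5 : 0 < p5 := Real.rpow_pos_of_pos hs0 _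
    have hq4 : p4 = p3 * (-x) := rpow_shift _ _ _ hs0 rfl
    have hm13 : p1 ≤ p3 := Real.rpow_le_rpow_of_exponent_le hs1 (by linarith)
    have hm23 : p2 ≤ p3 := Real.rpow_le_rpow_of_exponent_le hs1 (by linarith)
    -- bound each term
    have b1 : 0 ≤ (β + 5) * y ^ 2 * p5 := by positivity
    have b2 : -((y ^ 2 + a₁) * (E * β * p2 - (β + 1) * y ^ 2 * p3))
        ≤ (E + |a₁|) * ((E * β + (β + 1) * E) * p3) := by
      have hya : |y ^ 2 + a₁| ≤ E + |a₁| := by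
        calc |y ^ 2 + a₁| ≤ |y ^ 2| + |a₁| := abs_add_le _ _
          _ = y ^ 2 + |a₁| := by rw [abs_of_nonneg (sq_nonneg y)]
          _ ≤ E + |a₁| := by linarith
      have f1 : E * β * p2 ≤ E * β * p3 :=
        mul_le_mul_of_nonneg_left hm23 (by positivity)
      have f2 : (β + 1) * (y ^ 2 * p3) ≤ (β + 1) * (E * p3) :=
        mul_le_mul_of_nonneg_left (mul_le_mul_of_nonneg_right hyE hp3.le) (by linarith)
      have hin : |E * β * p2 - (β + 1) * y ^ 2 * p3| ≤ (E * β + (β + 1) * E) * p3 := by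
        rw [abs_le]
        constructor
        · linarith [f2, (mul_pos (mul_pos hE hβ) hp2).le,
            (mul_pos (mul_pos hE hβ) hp3).le]
        · linarith [f1, mul_nonneg (mul_nonneg (by linarith : (0:ℝ) ≤ β + 1)
            (sq_nonneg y)) hp3.le]
      calc -((y ^ 2 + a₁) * (E * β * p2 - (β + 1) * y ^ 2 * p3))
          ≤ |(y ^ 2 + a₁) * (E * β * p2 - (β + 1) * y ^ 2 * p3)| := neg_le_abs _
        _ = |y ^ 2 + a₁| * |E * β * p2 - (β + 1) * y ^ 2 * p3| := abs_mul _ _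
        _ ≤ (E + |a₁|) * ((E * β + (β + 1) * E) * p3) :=
            mul_le_mul hya hin (abs_nonneg _) (by positivity)
    have b3 : -(2 * a₂ * y * p4)
        ≤ (2 * κ₂ - E * β) / 4 * p4 + 4 / (2 * κ₂ - E * β) * (a₂ ^ 2 * E) * p3 := by
      have hyp4 : y ^ 2 * p4 ≤ E * p3 := by
        calc y ^ 2 * p4 = (y ^ 2 * (-x)) * p3 := by rw [hq4]; ring
          _ ≤ E * p3 := mul_le_mul_of_nonneg_right hyxE hp3.le
      have hamgm : -(2 * a₂ * y) ≤ (2 * κ₂ - E * β) / 4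
          + 4 / (2 * κ₂ - E * β) * (a₂ ^ 2 * y ^ 2) := by
        have h : -(2 * a₂ * y) * (2 * κ₂ - E * β)
            ≤ ((2 * κ₂ - E * β) / 4) * (2 * κ₂ - E * β) + 4 * (a₂ ^ 2 * y ^ 2) := by
          nlinarith [sq_nonneg ((2 * κ₂ - E * β) / 2 + 2 * a₂ * y)]
        have h2 := (div_le_div_iff_of_pos_right hδ).mpr h
        calc -(2 * a₂ * y) = -(2 * a₂ * y) * (2 * κ₂ - E * β) / (2 * κ₂ - E * β) := by
              field_simp
          _ ≤ (((2 * κ₂ - E * β) / 4) * (2 * κ₂ - E * β) + 4 * (a₂ ^ 2 * y ^ 2))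
              / (2 * κ₂ - E * β) := h2
          _ = (2 * κ₂ - E * β) / 4 + 4 / (2 * κ₂ - E * β) * (a₂ ^ 2 * y ^ 2) := by
              field_simp
      have step1 : -(2 * a₂ * y * p4) ≤ ((2 * κ₂ - E * β) / 4
          + 4 / (2 * κ₂ - E * β) * (a₂ ^ 2 * y ^ 2)) * p4 := by
        have := mul_le_mul_of_nonneg_right hamgm hp4.le
        linarith [this]
      have step2 : 4 / (2 * κ₂ - E * β) * a₂ ^ 2 * (y ^ 2 * p4)
          ≤ 4 / (2 * κ₂ - E * β) * a₂ ^ 2 * (E * p3) :=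
        mul_le_mul_of_nonneg_left hyp4 (by positivity)
      linarith [step1, step2]
    have b4 : κ₁ * (E * β * (β - 1) * p1 - β * (β + 1) * y ^ 2 * p2)
        ≤ κ₁ * (E * β * (β + 1)) * p3 := by
      have g1a : (β - 1) * p1 ≤ (β + 1) * p1 :=
        mul_le_mul_of_nonneg_right (by linarith) hp1.le
      have g1b : (β + 1) * p1 ≤ (β + 1) * p3 :=
        mul_le_mul_of_nonneg_left hm13 (by linarith)
      have g1 : E * β * ((β - 1) * p1) ≤ E * β * ((β + 1) * p3) :=
        mul_le_mul_of_nonneg_left (g1a.trans g1b) (by positivity)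
      have g2 : 0 ≤ β * (β + 1) * y ^ 2 * p2 := by positivity
      have := mul_le_mul_of_nonneg_left
        (show E * β * (β - 1) * p1 - β * (β + 1) * y ^ 2 * p2 ≤ E * β * (β + 1) * p3 by
          linarith [g1, g2]) hκ₁
      linarith [this]
    have bA : (E + |a₁|) * ((E * β + (β + 1) * E) * p3)
        + 4 / (2 * κ₂ - E * β) * (a₂ ^ 2 * E) * p3 + κ₁ * (E * β * (β + 1)) * p3
        ≤ (2 * κ₂ - E * β) / 4 * p4 := by
      have hAs : A ≤ (2 * κ₂ - E * β) / 4 * (-x) := by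
        have h1 : A = (2 * κ₂ - E * β) / 4 * (4 * A / (2 * κ₂ - E * β)) := by
          field_simp
        have h2 : 4 * A / (2 * κ₂ - E * β) ≤ s₀ := by rw [hs₀def]; linarith
        calc A = (2 * κ₂ - E * β) / 4 * (4 * A / (2 * κ₂ - E * β)) := h1
          _ ≤ (2 * κ₂ - E * β) / 4 * s₀ := mul_le_mul_of_nonneg_left h2 (by positivity)
          _ ≤ (2 * κ₂ - E * β) / 4 * (-x) := mul_le_mul_of_nonneg_left hss0 (by positivity)
      have hh := mul_le_mul_of_nonneg_right hAs hp3.le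
      rw [hAdef] at hh
      rw [hq4]
      linarith [hh]
    -- combine
    have hinner : (E * β - 2 * κ₂) * p4
        - (β + 5) * y ^ 2 * p5
        - (y ^ 2 + a₁) * (E * β * p2 - (β + 1) * y ^ 2 * p3)
        - 2 * a₂ * y * p4
        + κ₁ * (E * β * (β - 1) * p1 - β * (β + 1) * y ^ 2 * p2)
        ≤ -((2 * κ₂ - E * β) / 2) * p4 := by
      linarith [b1, b2, b3, b4, bA]
    calc C₅ * ((E * β - 2 * κ₂) * p4 - (β + 5) * y ^ 2 * p5
          - (y ^ 2 + a₁) * (E * β * p2 - (β + 1) * y ^ 2 * p3)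
          - 2 * a₂ * y * p4
          + κ₁ * (E * β * (β - 1) * p1 - β * (β + 1) * y ^ 2 * p2))
        ≤ C₅ * (-((2 * κ₂ - E * β) / 2) * p4) := mul_le_mul_of_nonneg_left hinner hC.le
      _ = -(C₅ * (2 * κ₂ - E * β) / 2) * p4 := by ring
  refine ⟨bullet1, ?_, ?_, ?_⟩
  · -- Bullet 2 : φ₅ → ∞
    intro K
    have hm0 : 0 < C₅ * (E * (1 - ξ⁻¹ ^ 2)) :=
      mul_pos hC (mul_pos hE (by linarith))
    set m := C₅ * (E * (1 - ξ⁻¹ ^ 2)) with hm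
    set K' : ℝ := max 1 (K / m) with hK'
    have hK'1 : (1:ℝ) ≤ K' := le_max_left _ _
    have hK'0 : (0:ℝ) < K' := by linarith
    refine ⟨max 1 (K' ^ (1/β : ℝ)), ?_⟩
    intro x y hx hy hR
    have hb1 := (bullet1 x y hx hy).1
    have habs : |x| = -x := abs_of_neg (by linarith)
    have hxK : K' ^ (1/β : ℝ) ≤ |x| := le_trans (le_max_right _ _) hR
    have hxb : K' ≤ |x| ^ (β : ℝ) := by
      have h1 : (K' ^ (1/β : ℝ)) ^ (β : ℝ) ≤ |x| ^ (β : ℝ) :=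
        Real.rpow_le_rpow (by positivity) hxK hβ.le
      rwa [← Real.rpow_mul hK'0.le, one_div, inv_mul_cancel₀ (ne_of_gt hβ),
        Real.rpow_one] at h1
    have hKm : K ≤ m * K' := by
      have h2 : K / m ≤ K' := le_max_right _ _
      calc K = m * (K / m) := by field_simp
        _ ≤ m * K' := mul_le_mul_of_nonneg_left h2 hm0.le
    have h3 : m * K' ≤ m * |x| ^ (β : ℝ) := mul_le_mul_of_nonneg_left hxb hm0.le
    have hφlb : m * |x| ^ (β : ℝ) ≤ φ₅ x y := by
      rw [hφ, hm]
      linarith [mul_le_mul_of_nonneg_left hb1 hC.le]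
    linarith
  · exact bullet3
  · -- Bullet 4
    intro K
    obtain ⟨R₃, hR₃, c, hc, h3⟩ := bullet3
    refine ⟨E + (R₃ + τ * (|K| + 1) / c + 1) ^ 2, ?_⟩
    intro x y hx hy hR
    obtain ⟨hs1, habs, -, -, hyE⟩ := constraint_facts E ξ x y hE hξ hx hy
    have hx0 : x < 0 := by linarith
    have hs0 : (0:ℝ) < -x := by linarith
    have hM0 : 0 < R₃ + τ * (|K| + 1) / c + 1 := by positivity
    have hx2 : (R₃ + τ * (|K| + 1) / c + 1) ^ 2 ≤ x ^ 2 := by linarith [hyE, hR]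
    have hsM : R₃ + τ * (|K| + 1) / c + 1 ≤ -x := by
      calc R₃ + τ * (|K| + 1) / c + 1
          = Real.sqrt ((R₃ + τ * (|K| + 1) / c + 1) ^ 2) := (Real.sqrt_sq hM0.le).symm
        _ ≤ Real.sqrt (x ^ 2) := Real.sqrt_le_sqrt hx2
        _ = |x| := Real.sqrt_sq_eq_abs x
        _ = -x := habs
    have hR3x : R₃ ≤ -x := by
      have h0 : 0 ≤ τ * (|K| + 1) / c := by positivity
      linarith
    have hR3sq : R₃ ^ 2 ≤ x ^ 2 + y ^ 2 := by
      linarith [mul_le_mul_of_nonneg_left hR3x hR₃.le,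
        mul_le_mul_of_nonneg_right hR3x hs0.le, sq_nonneg y]
    have h3' := h3 x y hx hy hR3sq
    rw [habs] at h3'
    have hp4s : -x ≤ (-x) ^ (β + 1 : ℝ) := by
      have h := Real.rpow_le_rpow_of_exponent_le hs1 (show (1:ℝ) ≤ β + 1 by linarith)
      rwa [Real.rpow_one] at h
    have hcs : τ * (|K| + 1) ≤ c * (-x) := by
      have hsc : τ * (|K| + 1) / c ≤ -x := by linarith
      have h := mul_le_mul_of_nonneg_left hsc hc.le
      calc τ * (|K| + 1) = c * (τ * (|K| + 1) / c) := by field_simp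
        _ ≤ c * (-x) := h
    have hch : -(c * (-x) ^ (β + 1 : ℝ)) ≤ -(τ * (|K| + 1)) := by
      have h := mul_le_mul_of_nonneg_left hp4s hc.le
      linarith
    have hτM : τ * Mop τ a₁ a₂ κ₁ κ₂ φ₅ x y ≤ τ * K := by
      have hK1 : -(|K| + 1) ≤ K := by
        have := neg_abs_le K; linarith
      have h5 : τ * Mop τ a₁ a₂ κ₁ κ₂ φ₅ x y ≤ -(τ * (|K| + 1)) := by
        calc τ * Mop τ a₁ a₂ κ₁ κ₂ φ₅ x y ≤ -c * (-x) ^ (β + 1 : ℝ) := h3'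
          _ = -(c * (-x) ^ (β + 1 : ℝ)) := by ring
          _ ≤ -(τ * (|K| + 1)) := hch
      calc τ * Mop τ a₁ a₂ κ₁ κ₂ φ₅ x y ≤ -(τ * (|K| + 1)) := h5
        _ = τ * (-(|K| + 1)) := by ring
        _ ≤ τ * K := mul_le_mul_of_nonneg_left hK1 hτ.le
    exact le_of_mul_le_mul_left hτM hτ
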